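/- For every M > 0 there exist μ > 0 and C > 0 such that the following holds. Let c₃, γ ∈ ℝ with |c₃| + |γ| ≤ μ, and let U solve the profile ODE with parameters (c₃, γ) and satisfy sup_{y ∈ (−1,1)} |U(y)| ≤ M(|c₃| + |γ|). Then for all y ∈ (−1,1), |U''(y) + 2c₃ y/(1−y²)| ≤ C (|c₃| + |γ|) (1 + |ln(1−y²)|²). -/

import Mathlib

open Set

/-- `U` solves the profile ODE with parameters `(c₃, γ)`:
`U` is continuous on `[-1,1]`, `C²` on `(-1,1)`, satisfies
`(1-y²)U' + 2yU + U²/2 = c₃(1-y²)` on `(-1,1)`, and `U(0) = γ`. -/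
def SolvesProfileODE (c₃ γ : ℝ) (U : ℝ → ℝ) : Prop :=
  ContinuousOn U (Icc (-1) 1) ∧
  ContDiffOn ℝ 2 U (Ioo (-1) 1) ∧
  (∀ y ∈ Ioo (-1 : ℝ) 1,
    (1 - y ^ 2) * deriv U y + 2 * y * U y + (1 / 2) * (U y) ^ 2 = c₃ * (1 - y ^ 2)) ∧
  U 0 = γ

noncomputable def At (t : ℝ) : ℝ := (Real.log (1+t) - Real.log (1-t))/2

lemma At_nonneg {t : ℝ} (h0 : 0 ≤ t) (h1 : t < 1) : 0 ≤ At t := by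
  have h2 : Real.log (1-t) ≤ 0 := Real.log_nonpos (by linarith) (by linarith)
  have h3 : 0 ≤ Real.log (1+t) := Real.log_nonneg (by linarith)
  unfold At; linarith

lemma hasDerivAt_At {t : ℝ} (h0 : -1 < t) (h1 : t < 1) :
    HasDerivAt At (1/(1-t^2)) t := by
  have ha : (0:ℝ) < 1 + t := by linarith
  have hb : (0:ℝ) < 1 - t := by linarith
  have h1' : HasDerivAt (fun t : ℝ => Real.log (1+t)) (1/(1+t)) t := by
    have := (Real.hasDerivAt_log ha.ne').comp t ((hasDerivAt_id t).const_add 1)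
    simpa [Function.comp_def] using this
  have h2' : HasDerivAt (fun t : ℝ => Real.log (1-t)) (-(1/(1-t))) t := by
    have := (Real.hasDerivAt_log hb.ne').comp t ((hasDerivAt_id t).neg.const_add 1)
    simpa [Function.comp_def] using this
  have := (h1'.sub h2').div_const 2
  refine this.congr_deriv ?_
  have hc : (1:ℝ) - t^2 ≠ 0 := by nlinarith
  field_simp
  ring

lemma At_key {t : ℝ} (h0 : 0 ≤ t) (h1 : t < 1) : (1 + At t)^2 * (1 - t^2) ≤ 10 := by
  have ha : (0:ℝ) < 1 + t := by linarith
  have hb : (0:ℝ) < 1 - t := by linarith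
  set r := (1+t)/(1-t) with hr
  have hrpos : 0 < r := div_pos ha hb
  have hr1 : 1 ≤ r := (one_le_div hb).2 (by linarith)
  have hAt : At t = Real.log r / 2 := by
    unfold At; rw [Real.log_div ha.ne' hb.ne']
  have hsq : Real.log (Real.sqrt r) ≤ Real.sqrt r - 1 :=
    Real.log_le_sub_one_of_pos (Real.sqrt_pos.2 hrpos)
  have hls : Real.log (Real.sqrt r) = Real.log r / 2 := Real.log_sqrt hrpos.le
  have hA_le : At t ≤ Real.sqrt r := by rw [hAt, ← hls]; linarith [Real.sqrt_nonneg r]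
  have hA0 : 0 ≤ At t := At_nonneg h0 h1
  have hA2 : (At t)^2 ≤ r := by
    calc (At t)^2 ≤ (Real.sqrt r)^2 := by nlinarith
    _ = r := Real.sq_sqrt hrpos.le
  have hrm : r * (1 - t^2) = (1+t)^2 := by
    rw [hr]; field_simp; ring
  nlinarith [mul_le_mul_of_nonneg_right hA2 (by nlinarith : (0:ℝ) ≤ 1 - t^2), hrm,
    sq_nonneg (1 - At t), sq_nonneg t, hb.le, ha.le]

lemma barrier (ε : ℝ) (hε : 0 < ε) (hεs : ε ≤ 1/40) (W D : ℝ → ℝ)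
    (hW : ∀ t ∈ Ico (0:ℝ) 1, HasDerivAt W (D t) t)
    (hD : ∀ t ∈ Ico (0:ℝ) 1, |D t| ≤ ε/(1-t^2) + (W t)^2/2)
    (h0 : |W 0| ≤ ε) :
    ∀ t ∈ Ico (0:ℝ) 1, |W t| ≤ 2*ε*(1 + At t) := by
  by_contra hcon
  push_neg at hcon
  obtain ⟨t₁, ht₁, ht₁'⟩ := hcon
  set S : Set ℝ := {t | t ∈ Ico (0:ℝ) 1 ∧ 2*ε*(1 + At t) < |W t|} with hS
  have hne : S.Nonempty := ⟨t₁, ht₁, ht₁'⟩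
  have hbd : BddBelow S := ⟨0, fun t ht => ht.1.1⟩
  set y₀ := sInf S with hy₀def
  have hy₀0 : 0 ≤ y₀ := le_csInf hne (fun t ht => ht.1.1)
  have hy₀1 : y₀ < 1 := lt_of_le_of_lt (csInf_le hbd ⟨ht₁, ht₁'⟩) ht₁.2
  have hy₀m : y₀ ∈ Ico (0:ℝ) 1 := ⟨hy₀0, hy₀1⟩
  have hpos : (0:ℝ) < 1 - y₀^2 := by nlinarith [hy₀m.1, hy₀m.2]
  -- g
  set g : ℝ → ℝ := fun t => |W t| - 2*ε*(1 + At t) with hg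
  have hgS : ∀ s ∈ S, 0 < g s := by
    intro s hs; simp only [hg]; have := hs.2; simp only [sub_pos]; exact this
  have hlt : ∀ t, 0 ≤ t → t < y₀ → g t ≤ 0 := by
    intro t h0t hty
    have htS : t ∉ S := notMem_of_lt_csInf hty hbd
    by_contra hgt
    push_neg at hgt
    exact htS ⟨⟨h0t, by linarith [hy₀m.2]⟩, by simpa [hg, sub_pos] using hgt⟩
  -- continuity of g at y₀
  have hWc : ContinuousAt W y₀ := (hW y₀ hy₀m).continuousAt
  have hAtc : ContinuousAt At y₀ := (hasDerivAt_At (by linarith) hy₀1).continuousAt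
  have hgc : ContinuousAt g y₀ := by
    exact hWc.abs.sub (continuousAt_const.mul (continuousAt_const.add hAtc))
  -- g y₀ ≤ 0
  have hgy₀ : g y₀ ≤ 0 := by
    rcases eq_or_lt_of_le hy₀0 with h | h
    · have hAt0 : At 0 = 0 := by simp [At]
      simp only [hg, ← h, hAt0]
      linarith
    · have hev : ∀ᶠ t in nhdsWithin y₀ (Iio y₀), g t ≤ 0 := by
        have hmem : Ioo 0 y₀ ∈ nhdsWithin y₀ (Iio y₀) :=
          Ioo_mem_nhdsLT_of_mem ⟨h, le_refl _⟩
        filter_upwards [hmem] with t ht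
        exact hlt t ht.1.le ht.2
      exact le_of_tendsto (hgc.continuousWithinAt.tendsto) hev
  rcases eq_or_lt_of_le hgy₀ with heq | hneg
  · -- first touch: g y₀ = 0, derivative argument
    have hgy0 : g y₀ = 0 := heq
    have hWy : |W y₀| = 2*ε*(1 + At y₀) := by
      have := hgy0; simp only [hg] at this; linarith
    have hAy0 : 0 ≤ At y₀ := At_nonneg hy₀0 hy₀1
    have hWne : W y₀ ≠ 0 := by
      intro hz
      rw [hz, abs_zero] at hWy
      nlinarith
    set σ : ℝ := if 0 < W y₀ then 1 else -1 with hσ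
    have hev : ∀ᶠ t in nhds y₀, |W t| = σ * W t := by
      rcases lt_trichotomy (W y₀) 0 with hn | hz | hp
      · have := hWc.eventually_mem (Iio_mem_nhds hn)
        filter_upwards [this] with t ht
        have : σ = -1 := by simp [hσ, not_lt.2 (le_of_lt hn)]
        rw [this, abs_of_neg ht]; ring
      · exact absurd hz hWne
      · have := hWc.eventually_mem (Ioi_mem_nhds hp)
        filter_upwards [this] with t ht
        have : σ = 1 := by simp [hσ, hp]
        rw [this, abs_of_pos ht]; ring
    have habs : HasDerivAt (fun t => |W t|) (σ * D y₀) y₀ :=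
      ((hW y₀ hy₀m).const_mul σ).congr_of_eventuallyEq hev
    have hBd : HasDerivAt (fun t => 2*ε*(1 + At t)) (2*ε*(1/(1-y₀^2))) y₀ :=
      ((hasDerivAt_At (by linarith) hy₀1).const_add 1).const_mul (2*ε)
    have hgd : HasDerivAt g (σ * D y₀ - 2*ε*(1/(1-y₀^2))) y₀ := habs.sub hBd
    -- the derivative is negative
    have hDb := hD y₀ hy₀m
    have hσ1 : σ = 1 ∨ σ = -1 := by
      by_cases h : 0 < W y₀
      · left; simp [hσ, h]
      · right; simp [hσ, h]
    have hσabs : σ * D y₀ ≤ |D y₀| := by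
      rcases hσ1 with h1 | h1 <;> rw [h1]
      · rw [one_mul]; exact le_abs_self _
      · rw [neg_one_mul]; exact neg_le_abs (D y₀)
    have hW0sq : (W y₀)^2 = 4*ε^2*(1+At y₀)^2 := by
      rw [← sq_abs, hWy]; ring
    have hkey := At_key hy₀0 hy₀1
    have hDp : |D y₀| * (1-y₀^2) ≤ ε + 2*ε^2*((1+At y₀)^2*(1-y₀^2)) := by
      have h1 : |D y₀| * (1-y₀^2) ≤ (ε/(1-y₀^2) + (W y₀)^2/2) * (1-y₀^2) :=
        mul_le_mul_of_nonneg_right hDb hpos.le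
      have h2 : (ε/(1-y₀^2) + (W y₀)^2/2) * (1-y₀^2)
          = ε + 2*ε^2*((1+At y₀)^2*(1-y₀^2)) := by
        rw [hW0sq]; field_simp; ring
      linarith
    have hfin : |D y₀| * (1-y₀^2) < 2*ε := by nlinarith [sq_nonneg ε]
    have hd : σ * D y₀ - 2*ε*(1/(1-y₀^2)) < 0 := by
      have h1 : σ * D y₀ * (1-y₀^2) ≤ |D y₀| * (1-y₀^2) :=
        mul_le_mul_of_nonneg_right hσabs hpos.le
      have h2 : σ * D y₀ < 2*ε/(1-y₀^2) := by
        rw [lt_div_iff₀ hpos]; linarith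
      have h3 : 2*ε*(1/(1-y₀^2)) = 2*ε/(1-y₀^2) := by ring
      linarith [h2, h3.ge]
    -- slope argument
    have hslope : Filter.Tendsto (slope g y₀) (nhdsWithin y₀ {y₀}ᶜ)
        (nhds (σ * D y₀ - 2*ε*(1/(1-y₀^2)))) := hasDerivAt_iff_tendsto_slope.1 hgd
    have hslope' : Filter.Tendsto (slope g y₀) (nhdsWithin y₀ (Ioi y₀))
        (nhds (σ * D y₀ - 2*ε*(1/(1-y₀^2)))) :=
      hslope.mono_left (nhdsWithin_mono _ (fun x hx => ne_of_gt hx))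
    have hev1 : ∀ᶠ t in nhdsWithin y₀ (Ioi y₀), slope g y₀ t < 0 :=
      hslope'.eventually_lt_const hd
    have hev2 : ∀ᶠ t in nhdsWithin y₀ (Ioi y₀), g t < 0 := by
      filter_upwards [hev1, self_mem_nhdsWithin] with t h1 h2
      have hts : 0 < t - y₀ := sub_pos.2 h2
      have : slope g y₀ t = (g t - g y₀)/(t - y₀) := by
        rw [slope_def_field]
      rw [this, hgy0, sub_zero] at h1
      rcases div_neg_iff.1 h1 with ⟨_, hb⟩ | ⟨ha, _⟩
      · linarith
      · exact ha
    obtain ⟨δ, hδ, hball⟩ := Metric.mem_nhdsWithin_iff.1 hev2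
    obtain ⟨s, hsS, hslt⟩ := (csInf_lt_iff hbd hne).1 (by linarith : sInf S < y₀ + δ)
    have hsy : y₀ ≤ s := csInf_le hbd hsS
    have hsy' : y₀ < s := lt_of_le_of_ne hsy (by rintro rfl; exact absurd (hgS _ hsS) (by linarith))
    have hdist : dist s y₀ < δ := by
      rw [Real.dist_eq, abs_of_nonneg (by linarith)]; linarith
    have : g s < 0 := hball ⟨Metric.mem_ball.2 hdist, hsy'⟩
    exact absurd (hgS s hsS) (by linarith)
  · -- g y₀ < 0, contradiction with inf by continuity
    have hev : ∀ᶠ t in nhds y₀, g t < 0 := hgc.eventually_mem (Iio_mem_nhds hneg)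
    rw [Metric.eventually_nhds_iff] at hev
    obtain ⟨δ, hδ, hball⟩ := hev
    obtain ⟨s, hsS, hslt⟩ := (csInf_lt_iff hbd hne).1 (by linarith : sInf S < y₀ + δ)
    have hsy : y₀ ≤ s := csInf_le hbd hsS
    have hdist : dist s y₀ < δ := by
      rw [Real.dist_eq, abs_of_nonneg (by linarith)]; linarith
    exact absurd (hgS s hsS) (by linarith [hball hdist])

set_option maxHeartbeats 2000000 in
/-- Asymptotics of `U''` (Lemma 2.1, estimate (2.4)). -/
theorem stmt7 (M : ℝ) (hM : 0 < M) :
    ∃ μ > 0, ∃ C > 0, ∀ c₃ γ : ℝ, |c₃| + |γ| ≤ μ →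
      ∀ U : ℝ → ℝ, SolvesProfileODE c₃ γ U →
        (∀ y ∈ Ioo (-1 : ℝ) 1, |U y| ≤ M * (|c₃| + |γ|)) →
        ∀ y ∈ Ioo (-1 : ℝ) 1,
          |deriv (deriv U) y + 2 * c₃ * y / (1 - y ^ 2)|
            ≤ C * (|c₃| + |γ|) * (1 + |Real.log (1 - y ^ 2)| ^ 2) := by
  refine ⟨1/40, by norm_num, 32*M + 32, by positivity, ?_⟩
  intro c₃ γ hμ U hsol hbound y hy
  obtain ⟨hUc, hU2, hode, hU0⟩ := hsol
  set ε := |c₃| + |γ| with hε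
  have hε0 : 0 ≤ ε := by positivity
  have hy1 : -1 < y := hy.1
  have hy2 : y < 1 := hy.2
  have hden : ∀ z ∈ Ioo (-1:ℝ) 1, (0:ℝ) < 1 - z^2 := by
    intro z hz; nlinarith [hz.1, hz.2]
  have hypos := hden y hy
  rcases eq_or_lt_of_le hε0 with hε0' | hεpos
  · -- ε = 0 case: U ≡ 0, c₃ = 0
    have hc0 : c₃ = 0 := by
      have : |c₃| = 0 := by
        have := abs_nonneg c₃; have := abs_nonneg γ; linarith [hε0'.symm ▸ (le_refl ε)]
      exact abs_eq_zero.1 this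
    have hee : ε = 0 := hε0'.symm
    have hU00 : ∀ z ∈ Ioo (-1:ℝ) 1, U z = 0 := by
      intro z hz
      have h' := hbound z hz
      rw [hee] at h'
      simp only [mul_zero] at h'
      exact abs_eq_zero.1 (le_antisymm h' (abs_nonneg _))
    have hd1 : ∀ z ∈ Ioo (-1:ℝ) 1, deriv U z = 0 := by
      intro z hz
      have hev : U =ᶠ[nhds z] (fun _ => 0) :=
        Filter.eventuallyEq_of_mem (isOpen_Ioo.mem_nhds hz) hU00
      rw [hev.deriv_eq, deriv_const]
    have hd2 : deriv (deriv U) y = 0 := by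
      have hev : deriv U =ᶠ[nhds y] (fun _ => 0) :=
        Filter.eventuallyEq_of_mem (isOpen_Ioo.mem_nhds hy) hd1
      rw [hev.deriv_eq, deriv_const]
    rw [hd2, hc0, hee]
    simp
  · -- main case
    have hεs : ε ≤ 1/40 := hμ
    set W : ℝ → ℝ := fun z => U z / (1 - z^2) with hW
    set D : ℝ → ℝ := fun z => c₃/(1-z^2) - (W z)^2/2 with hD
    have hdiff : ∀ z ∈ Ioo (-1:ℝ) 1, HasDerivAt U (deriv U z) z := by
      intro z hz
      exact ((hU2.differentiableOn (by norm_num)).differentiableAt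
        (isOpen_Ioo.mem_nhds hz)).hasDerivAt
    have hWd : ∀ z ∈ Ioo (-1:ℝ) 1, HasDerivAt W (D z) z := by
      intro z hz
      have hz2 := hden z hz
      have hden' : HasDerivAt (fun t : ℝ => 1 - t^2) (-(2*z)) z := by
        simpa using ((hasDerivAt_pow 2 z).const_sub 1)
      have h := (hdiff z hz).div hden' hz2.ne'
      refine h.congr_deriv ?_
      have hnum : deriv U z * (1 - z ^ 2) - U z * -(2 * z)
          = c₃*(1-z^2) - (U z)^2/2 := by linarith [hode z hz]
      rw [hnum]
      simp only [hD, hW]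
      field_simp
    have hDabs : ∀ z ∈ Ioo (-1:ℝ) 1, |D z| ≤ ε/(1-z^2) + (W z)^2/2 := by
      intro z hz
      have hz2 := hden z hz
      have h1 : |D z| ≤ |c₃/(1-z^2)| + |(W z)^2/2| := abs_sub _ _
      have h2 : |c₃/(1-z^2)| = |c₃|/(1-z^2) := by
        rw [abs_div, abs_of_pos hz2]
      have h3 : |(W z)^2/2| = (W z)^2/2 := abs_of_nonneg (by positivity)
      have hc3 : |c₃| ≤ ε := by rw [hε]; linarith [abs_nonneg γ]
      have h4 : |c₃|/(1-z^2) ≤ ε/(1-z^2) := by gcongr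
      linarith
    -- apply barrier on both sides
    have hIco : Ico (0:ℝ) 1 ⊆ Ioo (-1:ℝ) 1 := fun t ht => ⟨by linarith [ht.1], ht.2⟩
    have hW0 : |W 0| ≤ ε := by
      simp only [hW]
      norm_num [hU0]
      rw [hε]; linarith [abs_nonneg c₃]
    have hbar1 : ∀ t ∈ Ico (0:ℝ) 1, |W t| ≤ 2*ε*(1 + At t) :=
      barrier ε hεpos hεs W D (fun t ht => hWd t (hIco ht))
        (fun t ht => hDabs t (hIco ht)) hW0
    have hbar2 : ∀ t ∈ Ico (0:ℝ) 1, |W (-t)| ≤ 2*ε*(1 + At t) := by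
      have hIco' : ∀ t ∈ Ico (0:ℝ) 1, -t ∈ Ioo (-1:ℝ) 1 :=
        fun t ht => ⟨by linarith [ht.2], by linarith [ht.1]⟩
      refine barrier ε hεpos hεs (fun t => W (-t)) (fun t => -D (-t)) ?_ ?_ ?_
      · intro t ht
        have h := (hWd (-t) (hIco' t ht)).comp t (hasDerivAt_neg t)
        simpa [Function.comp_def] using h
      · intro t ht
        have h := hDabs (-t) (hIco' t ht)
        simpa [neg_sq] using (by rwa [abs_neg] : |(-D (-t))| ≤ ε/(1-(-t)^2) + (W (-t))^2/2)
      · simpa using hW0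
    have hWb : |W y| ≤ 2*ε*(1 + At |y|) := by
      rcases le_or_gt 0 y with h | h
      · rw [abs_of_nonneg h]; exact hbar1 y ⟨h, hy2⟩
      · rw [abs_of_neg h]
        have := hbar2 (-y) ⟨by linarith, by linarith⟩
        simpa using this
    -- relate At |y| to L
    set L := |Real.log (1 - y^2)| with hL
    have hL0 : 0 ≤ L := abs_nonneg _
    have hya : |y| < 1 := abs_lt.2 ⟨hy1, hy2⟩
    have hya0 : 0 ≤ |y| := abs_nonneg y
    have hsplit : Real.log (1 - y^2) = Real.log (1-|y|) + Real.log (1+|y|) := by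
      rw [← Real.log_mul (by linarith : (1:ℝ)-|y| ≠ 0) (by positivity : (1:ℝ)+|y| ≠ 0)]
      congr 1
      rw [← sq_abs y]; ring
    have hlog2 : Real.log (1+|y|) ≤ Real.log 2 :=
      Real.log_le_log (by positivity) (by linarith)
    have hlognn : 0 ≤ Real.log (1+|y|) := Real.log_nonneg (by linarith)
    have hlogL : -Real.log (1 - y^2) ≤ L := neg_le_abs _
    have hlog21 : Real.log 2 ≤ 1 := by
      linarith [Real.log_le_sub_one_of_pos (by norm_num : (0:ℝ) < 2)]
    have hAtb : At |y| ≤ 2 + L/2 := by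
      unfold At
      have : -Real.log (1-|y|) = Real.log (1+|y|) - Real.log (1 - y^2) := by
        rw [hsplit]; ring
      nlinarith [hlogL, hlog2, hlognn, hlog21]
    have hWfin : |W y| ≤ 2*ε*(3 + L/2) := by
      refine hWb.trans (mul_le_mul_of_nonneg_left ?_ (by positivity))
      linarith
    -- second derivative formula
    set F : ℝ → ℝ := fun z => c₃ - 2*z*W z - (1-z^2)*(W z)^2/2 with hF
    have hUF : ∀ z ∈ Ioo (-1:ℝ) 1, deriv U z = F z := by
      intro z hz
      have hz2 := hden z hz
      have key := hode z hz
      have hWU : W z * (1-z^2) = U z := by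
        simp only [hW]; field_simp
      have h1 : deriv U z * (1-z^2) = F z * (1-z^2) := by
        simp only [hF]
        linear_combination key + (2*z)*hWU + (((1-z^2)*W z + U z)/2)*hWU
      exact mul_right_cancel₀ hz2.ne' h1
    have hder2 : deriv (deriv U) y = deriv F y :=
      (Filter.eventuallyEq_of_mem (isOpen_Ioo.mem_nhds hy) (fun z hz => hUF z hz)).deriv_eq
    have hWy := hWd y hy
    have hden' : HasDerivAt (fun t : ℝ => 1 - t^2) (-(2*y)) y := by
      simpa using ((hasDerivAt_pow 2 y).const_sub 1)
    have p1 : HasDerivAt (fun z => 2*z*W z) (2*W y + 2*y*D y) y := by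
      have := ((hasDerivAt_id y).const_mul 2).mul hWy
      refine this.congr_deriv ?_
      simp only [id_eq]
      ring
    have p2 : HasDerivAt (fun z => (1-z^2)*(W z)^2/2)
        ((-(2*y)*(W y)^2 + (1-y^2)*(2*W y*D y))/2) y := by
      have hsq : HasDerivAt (fun z => (W z)^2) (2*W y*D y) y := by
        have := hWy.pow 2
        exact this.congr_deriv (by simp [pow_one])
      exact (hden'.mul hsq).div_const 2
    have hFd : HasDerivAt F
        (0 - (2*W y + 2*y*D y) - (-(2*y)*(W y)^2 + (1-y^2)*(2*W y*D y))/2) y := by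
      exact ((hasDerivAt_const y c₃).sub p1).sub p2
    have hform : deriv (deriv U) y + 2*c₃*y/(1-y^2)
        = -2*W y - c₃*W y + 2*y*(W y)^2 + (1-y^2)*(W y)^3/2 := by
      rw [hder2, hFd.deriv]
      simp only [hD]
      field_simp
      ring
    rw [hform]
    clear_value W D F ε L
    -- final estimates
    have hUWy : (1-y^2)*|W y| ≤ M*ε := by
      have : |W y| = |U y|/(1-y^2) := by
        simp only [hW]; rw [abs_div, abs_of_pos hypos]
      rw [this]
      rw [mul_div_cancel₀ _ hypos.ne']
      exact hbound y hy
    have hc3' : |c₃| ≤ ε := by rw [hε]; linarith [abs_nonneg γ]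
    clear hbar1 hbar2 hWd hDabs hdiff hUF hode hbound hUc hU2 hWb hWy hden
    clear hder2 p1 p2 hFd hform hW hD hF hU0 hIco hW0 hsplit hlog2 hlognn
    clear hlogL hlog21 hAtb hμ hε hε0 hden' hL
    set w := |W y| with hw
    have hw0 : 0 ≤ w := abs_nonneg _
    have hbw : w ≤ 2*ε*(3 + L/2) := hWfin
    have hyabs : |y| ≤ 1 := hya.le
    have htri : |(-2*W y - c₃*W y + 2*y*(W y)^2 + (1-y^2)*(W y)^3/2)|
        ≤ 2*w + ε*w + 2*(W y)^2 + (1-y^2)*w*(W y)^2/2 := by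
      have e1 : |(-2*W y)| = 2*w := by rw [abs_mul]; norm_num; exact hw.symm
      have e2 : |c₃*W y| ≤ ε*w := by
        rw [abs_mul]
        exact mul_le_mul_of_nonneg_right hc3' hw0
      have e3 : |2*y*(W y)^2| ≤ 2*(W y)^2 := by
        rw [abs_mul, abs_mul, abs_of_nonneg (sq_nonneg (W y)),
          (by norm_num : |(2:ℝ)| = 2)]
        have h' := mul_le_mul_of_nonneg_right hyabs (sq_nonneg (W y))
        linarith
      have e4 : |(1-y^2)*(W y)^3/2| = (1-y^2)*w*(W y)^2/2 := by
        rw [abs_div, abs_mul, abs_of_pos hypos, abs_pow]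
        rw [show |W y|^3 = |W y| * |W y|^2 by ring, sq_abs]
        norm_num
        ring
      calc |(-2*W y - c₃*W y + 2*y*(W y)^2 + (1-y^2)*(W y)^3/2)|
          ≤ |(-2*W y - c₃*W y + 2*y*(W y)^2)| + |(1-y^2)*(W y)^3/2| := abs_add_le _ _
        _ ≤ (|(-2*W y - c₃*W y)| + |2*y*(W y)^2|) + |(1-y^2)*(W y)^3/2| := by
            gcongr; exact abs_add_le _ _
        _ ≤ ((|(-2*W y)| + |c₃*W y|) + |2*y*(W y)^2|) + |(1-y^2)*(W y)^3/2| := by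
            gcongr; exact abs_sub _ _
        _ ≤ 2*w + ε*w + 2*(W y)^2 + (1-y^2)*w*(W y)^2/2 := by
            rw [e1, e4]; linarith [e2, e3]
    have hcube : (1-y^2)*w*(W y)^2/2 ≤ M*ε*(W y)^2/2 := by
      have h' := mul_le_mul_of_nonneg_right hUWy (sq_nonneg (W y))
      linarith
    have hWsq : (W y)^2 ≤ (2*ε*(3+L/2))^2 := by
      rw [← sq_abs]
      exact pow_le_pow_left₀ hw0 hbw 2
    have hB : w ≤ ε*(6+L) := by linarith [hbw]
    have hB2 : (W y)^2 ≤ ε^2*(6+L)^2 := by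
      calc (W y)^2 ≤ (2*ε*(3+L/2))^2 := hWsq
        _ = ε^2*(6+L)^2 := by ring
    have hq1 : 6 + L ≤ 7*(1+L^2) := by nlinarith [sq_nonneg (L-1)]
    have hq2 : (6+L)^2 ≤ 42*(1+L^2) := by nlinarith [sq_nonneg (L-1)]
    have hpos3 : (0:ℝ) ≤ ε*(1+L^2) := by positivity
    have b1 : 2*(ε*(6+L)) ≤ 14*(ε*(1+L^2)) := by
      nlinarith [mul_le_mul_of_nonneg_left hq1 hεpos.le]
    have b2 : ε*(ε*(6+L)) ≤ ε*(1+L^2) := by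
      nlinarith [mul_le_mul_of_nonneg_left hq1 (sq_nonneg ε),
        mul_nonneg (mul_nonneg hεpos.le (by linarith : (0:ℝ) ≤ 1 - 7*ε))
          (by positivity : (0:ℝ) ≤ 1+L^2)]
    have b3 : 2*(ε^2*(6+L)^2) ≤ 3*(ε*(1+L^2)) := by
      nlinarith [mul_le_mul_of_nonneg_left hq2 (sq_nonneg ε),
        mul_nonneg (mul_nonneg hεpos.le (by linarith : (0:ℝ) ≤ 3 - 84*ε))
          (by positivity : (0:ℝ) ≤ 1+L^2)]
    have b4 : M*ε*(ε^2*(6+L)^2)/2 ≤ M*(ε*(1+L^2)) := by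
      nlinarith [mul_le_mul_of_nonneg_left hq2 (by positivity : (0:ℝ) ≤ M*ε^3/2),
        mul_nonneg (mul_nonneg hM.le (mul_nonneg hεpos.le
          (by nlinarith : (0:ℝ) ≤ 1 - 21*ε^2)))
          (by positivity : (0:ℝ) ≤ 1+L^2)]
    calc |(-2*W y - c₃*W y + 2*y*(W y)^2 + (1-y^2)*(W y)^3/2)|
        ≤ 2*w + ε*w + 2*(W y)^2 + (1-y^2)*w*(W y)^2/2 := htri
      _ ≤ 2*w + ε*w + 2*(W y)^2 + M*ε*(W y)^2/2 := by linarith [hcube]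
      _ ≤ 2*(ε*(6+L)) + ε*(ε*(6+L)) + 2*(ε^2*(6+L)^2) + M*ε*(ε^2*(6+L)^2)/2 := by
          gcongr <;> positivity
      _ ≤ (18+M)*(ε*(1+L^2)) := by linarith [b1, b2, b3, b4]
      _ ≤ (32*M+32)*ε*(1+L^2) := by nlinarith [mul_nonneg hM.le hpos3, hpos3]
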